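/- Let G be a finite connected graph with n ≥ 2 vertices and diameter d, and let G' be the c-cactus of G (obtained from G by attaching c pendant edges to every vertex of G), where c > (d+1)·n/(n-1). Then G' is not t-stackable for any vertex t of G'. -/

import Mathlib

/-- A legal cup-stacking move in the graph `G`. -/
def CupStep {V : Type*} [DecidableEq V] (G : SimpleGraph V) (c c' : V → ℕ) : Prop :=
  ∃ x y : V, x ≠ y ∧ 0 < c x ∧ 0 < c y ∧ G.dist x y = c x ∧
    c' = Function.update (Function.update c x 0) y (c y + c x)

/-- `G` is `t`-stackable. -/
def TStackable {V : Type*} [DecidableEq V] (G : SimpleGraph V) (t : V) : Prop :=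
  ∃ c : V → ℕ, Relation.ReflTransGen (CupStep G) (fun _ => 1) c ∧ ∀ v, v ≠ t → c v = 0

/-- The `c`-cactus of `G`: attach `c` pendant vertices to every vertex of `G`. -/
def cactus {V : Type*} (G : SimpleGraph V) (c : ℕ) : SimpleGraph (V ⊕ V × Fin c) where
  Adj a b :=
    (∃ u v, G.Adj u v ∧ a = Sum.inl u ∧ b = Sum.inl v) ∨
    (∃ v i, a = Sum.inl v ∧ b = Sum.inr (v, i)) ∨
    (∃ v i, a = Sum.inr (v, i) ∧ b = Sum.inl v)
  symm := by
    constructor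
    rintro a b (⟨u, v, h, rfl, rfl⟩ | ⟨v, i, rfl, rfl⟩ | ⟨v, i, rfl, rfl⟩)
    · exact Or.inl ⟨v, u, h.symm, rfl, rfl⟩
    · exact Or.inr (Or.inr ⟨v, i, rfl, rfl⟩)
    · exact Or.inr (Or.inl ⟨v, i, rfl, rfl⟩)
  loopless := by
    constructor
    rintro a (⟨u, v, h, rfl, hv⟩ | ⟨v, i, rfl, hv⟩ | ⟨v, i, rfl, hv⟩)
    · exact h.ne (Sum.inl.inj hv)
    · exact Sum.inl_ne_inr hv
    · exact Sum.inr_ne_inl hv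

namespace CactusProof

variable {W : Type*} [Fintype W] [DecidableEq W]

/-- the set of vertices recorded as having sent their pile to `v`. -/
def preim (dep : W → Option W) (v : W) : Finset W :=
  Finset.univ.filter (fun y => dep y = some v)

/-- the size of the pile of `y` when it departed. -/
noncomputable def sz (H : SimpleGraph W) (dep : W → Option W) (y : W) : ℕ :=
  (dep y).elim 0 (fun u => H.dist y u)

/-- The history invariant. -/
def Inv (H : SimpleGraph W) (dep : W → Option W) (cur : W → ℕ) : Prop :=
  (∀ v u, dep v = some u → v ≠ u ∧ cur v = 0 ∧
      H.dist v u = 1 + ∑ y ∈ preim dep v, sz H dep y) ∧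
  (∀ v, dep v = none → cur v = 1 + ∑ y ∈ preim dep v, sz H dep y)

lemma inv_step {H : SimpleGraph W} {dep : W → Option W} {cur cur' : W → ℕ}
    (hI : Inv H dep cur) (hs : CupStep H cur cur') :
    ∃ dep', Inv H dep' cur' := by
  obtain ⟨x, y, hxy, hx, hy, hdist, rfl⟩ := hs
  have hdx : dep x = none := by
    cases hdep : dep x with
    | none => rfl
    | some u => exact absurd ((hI.1 x u hdep).2.1) (by omega)
  have hdy : dep y = none := by
    cases hdep : dep y with
    | none => rfl
    | some u => exact absurd ((hI.1 y u hdep).2.1) (by omega)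
  set dep' := Function.update dep x (some y) with hdep'
  have hsz : ∀ z, z ≠ x → sz H dep' z = sz H dep z := by
    intro z hz; simp [sz, dep', Function.update_of_ne hz]
  have hszx : sz H dep' x = H.dist x y := by simp [sz, dep']
  have hpre : ∀ v, v ≠ y → preim dep' v = preim dep v := by
    intro v hv
    ext z
    simp only [preim, Finset.mem_filter, Finset.mem_univ, true_and]
    rcases eq_or_ne z x with rfl | hzx
    · simp only [dep', Function.update_self, hdx]
      constructor
      · intro h; exact absurd (Option.some.inj h).symm hv
      · intro h; cases h
    · simp [dep', Function.update_of_ne hzx]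
  have hprey : preim dep' y = insert x (preim dep y) := by
    ext z
    simp only [preim, Finset.mem_filter, Finset.mem_univ, true_and, Finset.mem_insert]
    rcases eq_or_ne z x with rfl | hzx
    · simp [dep']
    · simp [dep', Function.update_of_ne hzx, hzx]
  have hxnotin : x ∉ preim dep y := by simp [preim, hdx]
  have hsum : ∀ v, v ≠ y →
      ∑ z ∈ preim dep' v, sz H dep' z = ∑ z ∈ preim dep v, sz H dep z := by
    intro v hv
    rw [hpre v hv]
    refine Finset.sum_congr rfl fun z hz => hsz z ?_
    intro hzx; subst hzx
    simp [preim, hdx] at hz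
  have hsumy : ∑ z ∈ preim dep' y, sz H dep' z
      = H.dist x y + ∑ z ∈ preim dep y, sz H dep z := by
    rw [hprey, Finset.sum_insert hxnotin, hszx]
    congr 1
    refine Finset.sum_congr rfl fun z hz => hsz z ?_
    intro hzx; subst hzx; exact hxnotin hz
  refine ⟨dep', ?_, ?_⟩
  · intro v u hvu
    by_cases hvx : v = x
    · subst hvx
      have hxu : u = y := by
        have hx' : dep' v = some y := by simp [dep']
        rw [hx'] at hvu; exact (Option.some.inj hvu).symm
      subst hxu
      refine ⟨hxy, ?_, ?_⟩
      · simp [Function.update_of_ne hxy, Function.update_self]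
      · rw [hsum v hxy, hdist, hI.2 v hdx]
    · have hvu' : dep v = some u := by
        rwa [hdep', Function.update_of_ne hvx] at hvu
      obtain ⟨hne, hz, heq⟩ := hI.1 v u hvu'
      have hvy : v ≠ y := fun h => by
        subst h; rw [hdy] at hvu'; cases hvu'
      refine ⟨hne, ?_, ?_⟩
      · simp [Function.update_of_ne hvy, Function.update_of_ne hvx, hz]
      · rw [hsum v hvy]; exact heq
  · intro v hv
    have hvx : v ≠ x := by
      intro h; subst h; simp [dep'] at hv
    have hv' : dep v = none := by rwa [hdep', Function.update_of_ne hvx] at hv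
    rcases eq_or_ne v y with rfl | hvy
    · rw [hsumy, Function.update_self, hI.2 v hdy, hdist, hI.2 x hdx]
      omega
    · rw [hsum v hvy, Function.update_of_ne hvy, Function.update_of_ne hvx]
      exact hI.2 v hv'

lemma exists_inv {H : SimpleGraph W} {cfin : W → ℕ}
    (h : Relation.ReflTransGen (CupStep H) (fun _ => 1) cfin) :
    ∃ dep, Inv H dep cfin := by
  induction h with
  | refl =>
    refine ⟨fun _ => none, ?_, ?_⟩
    · intro v u h; simp at h
    · intro v _
      have : preim (fun _ : W => none) v = ∅ := by
        ext z; simp [preim]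
      simp [this]
  | tail _ hstep ih =>
    obtain ⟨dep, hI⟩ := ih
    exact inv_step hI hstep

lemma cupStep_sum {H : SimpleGraph W} {a b : W → ℕ} (h : CupStep H a b) :
    ∑ v, b v = ∑ v, a v := by
  obtain ⟨x, y, hxy, hx, hy, hdist, rfl⟩ := h
  rw [Finset.sum_update_of_mem (Finset.mem_univ y)]
  have hxmem : x ∈ Finset.univ \ {y} := by simp [hxy]
  rw [Finset.sum_eq_add_sum_sdiff_singleton_of_mem hxmem (Function.update a x 0)]
  rw [Function.update_self]
  rw [Finset.sum_eq_add_sum_sdiff_singleton_of_mem (Finset.mem_univ y) a,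
      Finset.sum_eq_add_sum_sdiff_singleton_of_mem hxmem a]
  have : ∑ z ∈ (Finset.univ \ {y}) \ {x}, Function.update a x 0 z
      = ∑ z ∈ (Finset.univ \ {y}) \ {x}, a z := by
    refine Finset.sum_congr rfl fun z hz => ?_
    have : z ≠ x := by simp at hz; tauto
    simp [Function.update_of_ne this]
  omega

lemma sum_of_chain {H : SimpleGraph W} {cfin : W → ℕ}
    (h : Relation.ReflTransGen (CupStep H) (fun _ => 1) cfin) :
    ∑ v, cfin v = Fintype.card W := by
  induction h with
  | refl => simp
  | tail _ hstep ih => rw [cupStep_sum hstep, ih]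

section Chain

variable {H : SimpleGraph W} {dep : W → Option W} {t : W}

lemma sz_succ_le
    (hI1 : ∀ v u, dep v = some u → H.dist v u = 1 + ∑ y ∈ preim dep v, sz H dep y)
    {a b w : W} (hab : dep a = some b) (hbw : dep b = some w) :
    sz H dep a + 1 ≤ sz H dep b := by
  have hb : sz H dep b = 1 + ∑ y ∈ preim dep b, sz H dep y := by
    simp only [sz, hbw, Option.elim]
    exact hI1 b w hbw
  have ha : a ∈ preim dep b := by simp [preim, hab]
  have := Finset.single_le_sum (f := sz H dep) (fun i _ => Nat.zero_le _) ha
  omega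

lemma chain_lt (ht : dep t = none)
    (hI1 : ∀ v u, dep v = some u → H.dist v u = 1 + ∑ y ∈ preim dep v, sz H dep y)
    (hsome : ∀ v, v ≠ t → (dep v).isSome)
    {a b : W} (h : Relation.ReflTransGen (fun x y => dep x = some y) a b) (hbt : b ≠ t) :
    a = b ∨ sz H dep a < sz H dep b := by
  induction h using Relation.ReflTransGen.head_induction_on with
  | refl => exact Or.inl rfl
  | @head a' x hax hxb ih =>
    have hxt : x ≠ t := by
      rintro rfl
      rcases Relation.ReflTransGen.cases_head hxb with rfl | ⟨w, hw, _⟩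
      · exact hbt rfl
      · rw [ht] at hw; cases hw
    obtain ⟨w, hw⟩ := Option.isSome_iff_exists.mp (hsome x hxt)
    have h1 : sz H dep a' + 1 ≤ sz H dep x := sz_succ_le hI1 hax hw
    rcases ih with rfl | hlt
    · right; omega
    · right; omega

lemma chain_comparable {a p q : W}
    (hp : Relation.ReflTransGen (fun x y => dep x = some y) a p)
    (hq : Relation.ReflTransGen (fun x y => dep x = some y) a q) :
    Relation.ReflTransGen (fun x y => dep x = some y) p q ∨
      Relation.ReflTransGen (fun x y => dep x = some y) q p := by
  revert hq
  induction hp using Relation.ReflTransGen.head_induction_on with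
  | refl => exact fun hq => Or.inl hq
  | @head a' x hax hxp ih =>
    intro hq
    rcases Relation.ReflTransGen.cases_head hq with rfl | ⟨w, hw, hwq⟩
    · exact Or.inr (hxp.head hax)
    · have hxw : x = w := Option.some.inj (hax ▸ hw)
      exact ih (hxw ▸ hwq)

end Chain

section Cactus

variable {V : Type*} [Fintype V] [DecidableEq V] {G : SimpleGraph V} {c : ℕ}

lemma cactus_adj_inr {w : V} {i : Fin c} {x : V ⊕ V × Fin c} :
    (cactus G c).Adj (Sum.inr (w, i)) x ↔ x = Sum.inl w := by
  constructor
  · rintro (⟨u, v, h, ha, hb⟩ | ⟨v, j, ha, hb⟩ | ⟨v, j, ha, rfl⟩)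
    · exact absurd ha (by simp)
    · exact absurd ha (by simp)
    · have : (w, i) = (v, j) := Sum.inr.inj ha
      rw [show v = w from (Prod.mk.injEq _ _ _ _ ▸ this).1.symm]
  · rintro rfl; exact Or.inr (Or.inr ⟨w, i, rfl, rfl⟩)

/-- the vertex of `G` underlying a vertex of the cactus. -/
def core : V ⊕ V × Fin c → V := Sum.elim id Prod.fst

def inlHom (G : SimpleGraph V) (c : ℕ) : G →g cactus G c :=
  ⟨Sum.inl, fun h => Or.inl ⟨_, _, h, rfl, rfl⟩⟩

lemma toCore_walk (a : V ⊕ V × Fin c) :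
    ∃ p : (cactus G c).Walk a (Sum.inl (core a)), p.length ≤ 1 := by
  rcases a with u | ⟨w, i⟩
  · exact ⟨SimpleGraph.Walk.nil, Nat.zero_le 1⟩
  · exact ⟨SimpleGraph.Walk.cons (cactus_adj_inr.mpr rfl) SimpleGraph.Walk.nil,
      le_refl 1⟩

lemma exists_short_walk (hG : G.Connected) (a b : V ⊕ V × Fin c) :
    ∃ p : (cactus G c).Walk a b, p.length ≤ G.dist (core a) (core b) + 2 := by
  obtain ⟨p1, hp1⟩ := toCore_walk a
  obtain ⟨p2, hp2⟩ := toCore_walk b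
  obtain ⟨q, hq⟩ := hG.exists_walk_length_eq_dist (core a) (core b)
  obtain ⟨q', hq'⟩ : ∃ q' : (cactus G c).Walk (Sum.inl (core a)) (Sum.inl (core b)),
      q'.length = q.length := ⟨q.map (inlHom G c), SimpleGraph.Walk.length_map _ _⟩
  refine ⟨p1.append (q'.append p2.reverse), ?_⟩
  simp only [SimpleGraph.Walk.length_append, SimpleGraph.Walk.length_reverse, hq']
  omega

lemma cactus_connected (hG : G.Connected) : (cactus G c).Connected := by
  have : Nonempty V := hG.nonempty
  constructor
  · intro a b
    obtain ⟨p, _⟩ := exists_short_walk hG a b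
    exact ⟨p⟩

lemma cactus_dist_le (hG : G.Connected) {d : ℕ}
    (hd : ∀ u v : V, G.dist u v ≤ d) (a b : V ⊕ V × Fin c) :
    (cactus G c).dist a b ≤ d + 2 := by
  obtain ⟨p, hp⟩ := exists_short_walk hG a b
  calc (cactus G c).dist a b ≤ p.length := SimpleGraph.dist_le p
    _ ≤ G.dist (core a) (core b) + 2 := hp
    _ ≤ d + 2 := by have := hd (core a) (core b); omega

lemma cactus_dist_one (hG : G.Connected) {w : V} {i : Fin c} {x : V ⊕ V × Fin c}
    (h : (cactus G c).dist (Sum.inr (w, i)) x = 1) : x = Sum.inl w :=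
  cactus_adj_inr.mp (SimpleGraph.dist_eq_one_iff_adj.mp h)

lemma cactus_pendant_pendant (hG : G.Connected) {w v : V} {i j : Fin c}
    (hne : (Sum.inr (w, i) : V ⊕ V × Fin c) ≠ Sum.inr (v, j)) :
    2 ≤ (cactus G c).dist (Sum.inr (w, i)) (Sum.inr (v, j)) := by
  have h0 : 0 < (cactus G c).dist (Sum.inr (w, i)) (Sum.inr (v, j)) :=
    (cactus_connected hG).pos_dist_of_ne hne
  have h1 : (cactus G c).dist (Sum.inr (w, i)) (Sum.inr (v, j)) ≠ 1 := by
    intro h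
    exact absurd (cactus_dist_one hG h) (by simp)
  omega

end Cactus

end CactusProof

theorem cactus_strongly_non_stackable {V : Type*} [Fintype V] [DecidableEq V]
    (G : SimpleGraph V) (hG : G.Connected) (hn : 2 ≤ Fintype.card V)
    (d : ℕ) (hd : d = Finset.univ.sup (fun p : V × V => G.dist p.1 p.2))
    (c : ℕ) (hc : ((d + 1 : ℕ) : ℚ) * Fintype.card V / (Fintype.card V - 1) < (c : ℚ)) :
    ∀ t : V ⊕ V × Fin c, ¬ TStackable (cactus G c) t := by
  classical
  intro t ht
  obtain ⟨cfin, hpath, hzero⟩ := ht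
  obtain ⟨dep, hI⟩ := CactusProof.exists_inv hpath
  set n := Fintype.card V with hn'
  -- the ℕ version of the numerical hypothesis
  have hnat : (d + 1) * n < c * (n - 1) := by
    have h1 : (0 : ℚ) < (n : ℚ) - 1 := by
      have : (2 : ℚ) ≤ (n : ℚ) := by exact_mod_cast hn
      linarith
    rw [div_lt_iff₀ h1] at hc
    have h2 : ((d + 1 : ℕ) : ℚ) * (n : ℚ) < (c : ℚ) * ((n - 1 : ℕ) : ℚ) := by
      have hcast : ((n - 1 : ℕ) : ℚ) = (n : ℚ) - 1 := by
        have h1n : 1 ≤ n := by omega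
        push_cast [Nat.cast_sub h1n]
        ring
      rw [hcast]; exact_mod_cast hc
    exact_mod_cast h2
  -- distance bounds
  have hdistle : ∀ u v : V, G.dist u v ≤ d := by
    intro u v
    rw [hd]
    exact Finset.le_sup (f := fun p : V × V => G.dist p.1 p.2) (Finset.mem_univ (u, v))
  have hconn : (cactus G c).Connected := CactusProof.cactus_connected hG
  have hHdist : ∀ a b : V ⊕ V × Fin c, (cactus G c).dist a b ≤ d + 2 :=
    fun a b => CactusProof.cactus_dist_le hG hdistle a b
  set s : V ⊕ V × Fin c → ℕ := CactusProof.sz (cactus G c) dep with hs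
  -- total number of cups
  have hsum : ∑ v, cfin v = Fintype.card (V ⊕ V × Fin c) := CactusProof.sum_of_chain hpath
  have hcardW : Fintype.card (V ⊕ V × Fin c) = n + n * c := by
    simp [Fintype.card_sum, Fintype.card_prod, Fintype.card_fin, hn']
  have hcfint : cfin t = Fintype.card (V ⊕ V × Fin c) := by
    rw [← hsum]
    exact (Finset.sum_eq_single_of_mem t (Finset.mem_univ t)
      (fun b _ hb => hzero b hb)).symm
  have hdept : dep t = none := by
    cases hdep : dep t with
    | none => rfl
    | some u =>
      have h0 := (hI.1 t u hdep).2.1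
      rw [hcfint, hcardW] at h0
      omega
  have hsome : ∀ v : V ⊕ V × Fin c, v ≠ t → ∃ u, dep v = some u := by
    intro v hv
    cases hdep : dep v with
    | none =>
      have h0 := hI.2 v hdep
      rw [hzero v hv] at h0
      omega
    | some u => exact ⟨u, rfl⟩
  -- basic facts about s
  have hsz_eq : ∀ (v u : V ⊕ V × Fin c), dep v = some u → s v = (cactus G c).dist v u := by
    intro v u hvu; simp [hs, CactusProof.sz, hvu]
  have hF2 : ∀ v : V ⊕ V × Fin c, v ≠ t → s v = 1 + ∑ y ∈ CactusProof.preim dep v, s y := by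
    intro v hv
    obtain ⟨u, hu⟩ := hsome v hv
    rw [hsz_eq v u hu]
    exact (hI.1 v u hu).2.2
  have hs_pos : ∀ v : V ⊕ V × Fin c, v ≠ t → 1 ≤ s v := by
    intro v hv
    obtain ⟨u, hu⟩ := hsome v hv
    rw [hsz_eq v u hu]
    exact hconn.pos_dist_of_ne (hI.1 v u hu).1
  have hs_le : ∀ v : V ⊕ V × Fin c, v ≠ t → s v ≤ d + 2 := by
    intro v hv
    obtain ⟨u, hu⟩ := hsome v hv
    rw [hsz_eq v u hu]
    exact hHdist v u
  have hsome' : ∀ v : V ⊕ V × Fin c, v ≠ t → (dep v).isSome := by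
    intro v hv
    obtain ⟨u, hu⟩ := hsome v hv
    simp [hu]
  have hI1' : ∀ (v u : V ⊕ V × Fin c), dep v = some u →
      (cactus G c).dist v u = 1 + ∑ y ∈ CactusProof.preim dep v, CactusProof.sz (cactus G c) dep y :=
    fun v u huv => (hI.1 v u huv).2.2
  -- every pendant with a pile of size ≥ 2 received cups from an inner vertex
  have hL4 : ∀ N (p : V ⊕ V × Fin c), s p ≤ N → p ≠ t → p.isRight → 2 ≤ s p →
      ∃ u : V, Relation.ReflTransGen (fun x y => dep x = some y) (Sum.inl u) p := by
    intro N
    induction N with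
    | zero => intro p hpN _ _ h2; omega
    | succ N ih =>
      intro p hpN hpt hpr hp2
      have hF2p := hF2 p hpt
      have hex : ∃ y ∈ CactusProof.preim dep p, 1 ≤ s y := by
        by_contra hcon
        push_neg at hcon
        have h0 : ∑ y ∈ CactusProof.preim dep p, s y = 0 :=
          Finset.sum_eq_zero (fun y hy => by have := hcon y hy; omega)
        omega
      obtain ⟨y, hy, hsy1⟩ := hex
      have hyp : dep y = some p := by
        simpa [CactusProof.preim] using hy
      have hyt : y ≠ t := fun h => by rw [h, hdept] at hyp; cases hyp
      have hsylt : s y ≤ N := by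
        have hmem := Finset.single_le_sum (f := s) (fun i _ => Nat.zero_le _) hy
        omega
      obtain ⟨⟨v, k⟩, hpq⟩ : ∃ q : V × Fin c, p = Sum.inr q := by
        rcases p with _ | q
        · simp at hpr
        · exact ⟨q, rfl⟩
      rcases hyy : y with u | ⟨w, j⟩
      · subst hyy
        exact ⟨u, Relation.ReflTransGen.single hyp⟩
      · subst hyy
        have hne : (Sum.inr (w, j) : V ⊕ V × Fin c) ≠ p := (hI.1 _ _ hyp).1
        have hsy2 : 2 ≤ s (Sum.inr (w, j)) := by
          rw [hsz_eq _ _ hyp, hpq]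
          rw [hpq] at hne
          exact CactusProof.cactus_pendant_pendant hG hne
        obtain ⟨u, hu⟩ := ih (Sum.inr (w, j)) hsylt hyt rfl hsy2
        exact ⟨u, hu.tail hyp⟩
  -- the counting function on pendants
  set g : V ⊕ V × Fin c → V := fun p =>
    if h : ∃ u : V, 2 ≤ s p ∧
        Relation.ReflTransGen (fun x y => dep x = some y) (Sum.inl u) p then h.choose
    else CactusProof.core p with hg
  set P : Finset (V ⊕ V × Fin c) := Finset.univ.filter (fun p => p.isRight ∧ p ≠ t) with hP
  set Cheap : V → Finset (V ⊕ V × Fin c) := fun u =>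
    P.filter (fun p => dep p = some (Sum.inl u) ∧ s p = 1) with hCheap
  set Anc : V → Finset (V ⊕ V × Fin c) := fun u =>
    P.filter (fun p => Relation.ReflTransGen (fun x y => dep x = some y) (Sum.inl u) p
      ∧ 2 ≤ s p) with hAnc
  -- fibers of g decompose into cheap pendants and pendant-ancestors
  have hsub : ∀ u : V, P.filter (fun p => g p = u) ⊆ Cheap u ∪ Anc u := by
    intro u p hp
    obtain ⟨hpP, hgp⟩ := Finset.mem_filter.mp hp
    obtain ⟨-, hpr, hpt⟩ :
        p ∈ Finset.univ ∧ p.isRight ∧ p ≠ t := by simpa [hP] using hpP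
    have h1 := hs_pos p hpt
    by_cases h2 : 2 ≤ s p
    · have hcond : ∃ u' : V, 2 ≤ s p ∧
          Relation.ReflTransGen (fun x y => dep x = some y) (Sum.inl u') p := by
        obtain ⟨u', hu'⟩ := hL4 (s p) p le_rfl hpt hpr h2
        exact ⟨u', h2, hu'⟩
      have hgeq : g p = hcond.choose := by rw [hg]; exact dif_pos hcond
      have hspec := hcond.choose_spec
      rw [← hgeq, hgp] at hspec
      exact Finset.mem_union_right _ (Finset.mem_filter.mpr ⟨hpP, hspec.2, hspec.1⟩)
    · have hs1 : s p = 1 := by omega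
      have hcond : ¬ ∃ u' : V, 2 ≤ s p ∧
          Relation.ReflTransGen (fun x y => dep x = some y) (Sum.inl u') p := by
        rintro ⟨u', h2', -⟩; omega
      have hgeq : g p = CactusProof.core p := by rw [hg]; exact dif_neg hcond
      obtain ⟨⟨w, i⟩, rfl⟩ : ∃ q : V × Fin c, p = Sum.inr q := by
        rcases p with _ | q
        · simp at hpr
        · exact ⟨q, rfl⟩
      obtain ⟨q, hq⟩ := hsome _ hpt
      have hdq : (cactus G c).dist (Sum.inr (w, i)) q = 1 := by
        rw [← hsz_eq _ _ hq, hs1]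
      have hqw : q = Sum.inl w := CactusProof.cactus_dist_one hG hdq
      have hwu : w = u := by
        rw [← hgp, hgeq]; rfl
      refine Finset.mem_union_left _ (Finset.mem_filter.mpr ⟨hpP, ?_, hs1⟩)
      rw [hq, hqw, hwu]
  -- the cheap fiber bound
  have hCheapBound : ∀ u : V, Sum.inl u ≠ t → (Cheap u).card ≤ s (Sum.inl u) - 1 := by
    intro u hut
    have hsub2 : Cheap u ⊆ CactusProof.preim dep (Sum.inl u) := by
      intro p hp
      obtain ⟨-, hdp, -⟩ := Finset.mem_filter.mp hp
      simp [CactusProof.preim, hdp]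
    have hcs : (Cheap u).card ≤ ∑ y ∈ CactusProof.preim dep (Sum.inl u), s y := by
      calc (Cheap u).card = ∑ p ∈ Cheap u, 1 := by simp
        _ ≤ ∑ p ∈ Cheap u, s p := by
            refine Finset.sum_le_sum fun p hp => ?_
            obtain ⟨hpP, -, -⟩ := Finset.mem_filter.mp hp
            obtain ⟨-, -, hpt⟩ :
                p ∈ Finset.univ ∧ p.isRight ∧ p ≠ t := by simpa [hP] using hpP
            exact hs_pos p hpt
        _ ≤ ∑ y ∈ CactusProof.preim dep (Sum.inl u), s y :=
            Finset.sum_le_sum_of_subset hsub2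
    have := hF2 (Sum.inl u) hut
    omega
  -- the ancestor fiber bound
  have hAncBound : ∀ u : V, Sum.inl u ≠ t → (Anc u).card ≤ (d + 2) - s (Sum.inl u) := by
    intro u hut
    have hmaps : ∀ p ∈ Anc u, s p ∈ Finset.Icc (s (Sum.inl u) + 1) (d + 2) := by
      intro p hp
      obtain ⟨hpP, hrtg, -⟩ := Finset.mem_filter.mp hp
      obtain ⟨-, hpr, hpt⟩ :
          p ∈ Finset.univ ∧ p.isRight ∧ p ≠ t := by simpa [hP] using hpP
      have hne : Sum.inl u ≠ p := by
        rintro rfl; simp at hpr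
      have hcl := CactusProof.chain_lt hdept hI1' hsome' hrtg hpt
      rw [← hs] at hcl
      rcases hcl with h | h
      · exact absurd h hne
      · exact Finset.mem_Icc.mpr ⟨by omega, hs_le p hpt⟩
    have hinj : Set.InjOn s (Anc u) := by
      intro p hp q hq heq
      obtain ⟨hpP, hrtgp, -⟩ := Finset.mem_filter.mp hp
      obtain ⟨hqP, hrtgq, -⟩ := Finset.mem_filter.mp hq
      obtain ⟨-, -, hpt⟩ :
          p ∈ Finset.univ ∧ p.isRight ∧ p ≠ t := by simpa [hP] using hpP
      obtain ⟨-, -, hqt⟩ :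
          q ∈ Finset.univ ∧ q.isRight ∧ q ≠ t := by simpa [hP] using hqP
      rcases CactusProof.chain_comparable hrtgp hrtgq with h | h
      · rcases CactusProof.chain_lt hdept hI1' hsome' h hqt with h' | h'
        · exact h'
        · rw [← hs] at h'; omega
      · rcases CactusProof.chain_lt hdept hI1' hsome' h hpt with h' | h'
        · exact h'.symm
        · rw [← hs] at h'; omega
    have := Finset.card_le_card_of_injOn s hmaps hinj
    rw [Nat.card_Icc] at this
    omega
  -- uniform fiber bound
  have hfib : ∀ u : V, Sum.inl u ≠ t → (P.filter (fun p => g p = u)).card ≤ d + 1 := by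
    intro u hut
    have h1 := Finset.card_le_card (hsub u)
    have h2 := Finset.card_union_le (Cheap u) (Anc u)
    have h3 := hCheapBound u hut
    have h4 := hAncBound u hut
    have h5 := hs_pos (Sum.inl u) hut
    have h6 := hs_le (Sum.inl u) hut
    omega
  -- fiberwise count
  have hfiber : P.card = ∑ u : V, (P.filter (fun p => g p = u)).card :=
    Finset.card_eq_sum_card_fiberwise (fun p _ => Finset.mem_univ (g p))
  have hfilterR : (Finset.univ.filter (fun p : V ⊕ V × Fin c => p.isRight)).card = n * c := by
    have hmap : Finset.univ.filter (fun p : V ⊕ V × Fin c => p.isRight)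
        = Finset.univ.map ⟨Sum.inr, Sum.inr_injective⟩ := by
      ext x
      simp only [Finset.mem_filter, Finset.mem_univ, true_and, Finset.mem_map,
        Function.Embedding.coeFn_mk, Sum.isRight_iff]
      constructor
      · rintro ⟨b, hb⟩; exact ⟨b, hb.symm⟩
      · rintro ⟨b, hb⟩; exact ⟨b, hb.symm⟩
    rw [hmap, Finset.card_map]
    simp [Fintype.card_prod, Fintype.card_fin, hn']
  -- case split on whether the target is inner or a pendant
  obtain ⟨w, hw⟩ | ⟨⟨w0, j0⟩, hw⟩ :
      (∃ w, t = Sum.inl w) ∨ (∃ q : V × Fin c, t = Sum.inr q) := by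
    rcases t with w | q
    · exact Or.inl ⟨w, rfl⟩
    · exact Or.inr ⟨q, rfl⟩
  · -- target is an inner vertex
    have hPeq : P = Finset.univ.filter (fun p : V ⊕ V × Fin c => p.isRight) := by
      ext p
      simp only [hP, Finset.mem_filter, Finset.mem_univ, true_and, hw]
      constructor
      · exact fun h => h.1
      · intro h
        refine ⟨h, ?_⟩
        rintro rfl
        simp at h
    have hPcard : P.card = n * c := by rw [hPeq, hfilterR]
    -- the fiber of w
    have hAncw : Anc w = ∅ := by
      ext p
      simp only [hAnc, Finset.mem_filter, Finset.notMem_empty, iff_false, not_and]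
      intro hpP hrtg
      obtain ⟨-, hpr, hpt⟩ :
          p ∈ Finset.univ ∧ p.isRight ∧ p ≠ t := by simpa [hP] using hpP
      exfalso
      rcases Relation.ReflTransGen.cases_head hrtg with h | ⟨x, hx, -⟩
      · exact hpt (h ▸ hw.symm)
      · rw [← hw, hdept] at hx; cases hx
    have hCheapw : (Cheap w).card ≤ c := by
      have hsub3 : Cheap w ⊆ (Finset.univ : Finset (Fin c)).image
          (fun i => (Sum.inr (w, i) : V ⊕ V × Fin c)) := by
        intro p hp
        obtain ⟨hpP, hdp, hs1⟩ := Finset.mem_filter.mp hp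
        obtain ⟨-, hpr, hpt⟩ :
            p ∈ Finset.univ ∧ p.isRight ∧ p ≠ t := by simpa [hP] using hpP
        obtain ⟨⟨x, i⟩, rfl⟩ : ∃ q : V × Fin c, p = Sum.inr q := by
          rcases p with _ | q
          · simp at hpr
          · exact ⟨q, rfl⟩
        have hdq : (cactus G c).dist (Sum.inr (x, i)) (Sum.inl w) = 1 := by
          rw [← hsz_eq _ _ hdp, hs1]
        have := CactusProof.cactus_dist_one hG hdq
        have hxw : x = w := by
          have := Sum.inl.inj this; exact this.symm
        subst hxw
        exact Finset.mem_image.mpr ⟨i, Finset.mem_univ i, rfl⟩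
      calc (Cheap w).card ≤ _ := Finset.card_le_card hsub3
        _ ≤ (Finset.univ : Finset (Fin c)).card := Finset.card_image_le
        _ = c := by simp
    have hfibw : (P.filter (fun p => g p = w)).card ≤ c := by
      have h1 := Finset.card_le_card (hsub w)
      rw [hAncw, Finset.union_empty] at h1
      omega
    -- sum the fibers
    have hsplit : ∑ u : V, (P.filter (fun p => g p = u)).card
        = (P.filter (fun p => g p = w)).card
          + ∑ u ∈ Finset.univ.erase w, (P.filter (fun p => g p = u)).card :=
      (Finset.add_sum_erase _ _ (Finset.mem_univ w)).symm
    have herase : ∑ u ∈ Finset.univ.erase w, (P.filter (fun p => g p = u)).card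
        ≤ (Finset.univ.erase w).card * (d + 1) := by
      have := Finset.sum_le_card_nsmul (Finset.univ.erase w)
        (fun u => (P.filter (fun p => g p = u)).card) (d + 1)
        (fun u hu => hfib u (by
          have huw : u ≠ w := (Finset.mem_erase.mp hu).1
          rw [hw]
          exact fun h => huw (Sum.inl.inj h)))
      simpa using this
    have hecard : (Finset.univ.erase w).card + 1 = n := by
      rw [Finset.card_erase_add_one (Finset.mem_univ w)]
      simp [hn']
    -- final arithmetic
    set E := (Finset.univ.erase w).card with hE
    have hbig : n * c ≤ c + E * (d + 1) := by
      rw [← hPcard, hfiber, hsplit]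
      linarith [hfibw, herase]
    have e1 : c * (n - 1) + c = c * n := by
      rw [← Nat.mul_succ]
      congr 1
      omega
    have e2 : E * (d + 1) + (d + 1) = n * (d + 1) := by
      rw [← hecard]
      ring
    have e3 : n * c = c * n := Nat.mul_comm n c
    have e4 : (d + 1) * n = n * (d + 1) := Nat.mul_comm _ n
    linarith [hnat, hbig, e1, e2, e3, e4]
  · -- target is a pendant vertex
    have htmem : t ∈ Finset.univ.filter (fun p : V ⊕ V × Fin c => p.isRight) := by
      simp [hw]
    have hPeq : P = (Finset.univ.filter (fun p : V ⊕ V × Fin c => p.isRight)).erase t := by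
      ext p
      simp only [hP, Finset.mem_filter, Finset.mem_univ, true_and, Finset.mem_erase]
      tauto
    have hPcard : P.card + 1 = n * c := by
      rw [hPeq, Finset.card_erase_add_one htmem, hfilterR]
    have hall : ∑ u : V, (P.filter (fun p => g p = u)).card ≤ n * (d + 1) := by
      have := Finset.sum_le_card_nsmul (Finset.univ : Finset V)
        (fun u => (P.filter (fun p => g p = u)).card) (d + 1)
        (fun u _ => hfib u (by rw [hw]; exact Sum.inl_ne_inr))
      simpa [hn'] using this
    have hc1 : 1 ≤ c := by
      rcases Nat.eq_zero_or_pos c with rfl | h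
      · simp at hnat
      · exact h
    have e1 : c * (n - 1) + c = c * n := by
      rw [← Nat.mul_succ]
      congr 1
      omega
    have e3 : n * c = c * n := Nat.mul_comm n c
    have e4 : (d + 1) * n = n * (d + 1) := Nat.mul_comm _ n
    have hbig : P.card ≤ n * (d + 1) := by
      rw [hfiber]; exact hall
    linarith [hnat, hbig, hPcard, e1, e3, e4, hc1]
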